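/- Let K be a group, let G_1, …, G_n be non-abelian simple groups, and let f : K → G_1 × G_2 × ⋯ × G_n be a group homomorphism such that each component homomorphism f_i : K → G_i (the composite of f with the i-th projection) is surjective, and such that for all i ≠ j there is no group isomorphism α : G_i ≅ G_j with f_j = α ∘ f_i. Then f is surjective. -/

import Mathlib

open Function

theorem lemA {ι : Type*} [Fintype ι] [DecidableEq ι] {S : ι → Type*} [∀ i, Group (S i)]
    [∀ i, IsSimpleGroup (S i)] {T : Type*} [Group T] [IsSimpleGroup T]
    (hT : ∃ a b : T, a * b ≠ b * a) (φ : (∀ i, S i) →* T) (hφ : Surjective φ) :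
    ∃ j : ι, ∃ e : S j ≃* T, ∀ g : ∀ i, S i, φ g = e (g j) := by
  classical
  set ψ : ∀ i, S i →* T := fun i => φ.comp (MonoidHom.mulSingle S i) with hψ
  have hnorm : ∀ i, ((ψ i).range).Normal := by
    intro i
    constructor
    rintro x ⟨g, rfl⟩ t
    obtain ⟨u, rfl⟩ := hφ t
    refine ⟨u i * g * (u i)⁻¹, ?_⟩
    have key : Pi.mulSingle i (u i * g * (u i)⁻¹) = u * Pi.mulSingle i g * u⁻¹ := by
      funext j
      by_cases h : j = i
      · subst h; simp
      · simp [Pi.mulSingle_apply, h]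
    show φ (Pi.mulSingle i (u i * g * (u i)⁻¹)) = φ u * ψ i g * (φ u)⁻¹
    rw [key, map_mul, map_mul, map_inv]
    rfl
  have hbt : ∀ i, (ψ i).range = ⊥ ∨ (ψ i).range = ⊤ := fun i => (hnorm i).eq_bot_or_eq_top
  have hex : ∃ j, (ψ j).range = ⊤ := by
    by_contra h
    push_neg at h
    have hbot : ∀ i, (ψ i).range = ⊥ := fun i => (hbt i).resolve_right (h i)
    have htriv : φ = 1 := by
      refine MonoidHom.pi_ext fun i x => ?_
      have : ψ i x ∈ (ψ i).range := ⟨x, rfl⟩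
      rw [hbot i] at this
      exact (by simpa using this : ψ i x = 1)
    obtain ⟨a, b, hab⟩ := hT
    obtain ⟨x, rfl⟩ := hφ a
    obtain ⟨y, rfl⟩ := hφ b
    rw [htriv] at hab
    exact hab rfl
  obtain ⟨j, hj⟩ := hex
  have hbot : ∀ i, i ≠ j → (ψ i).range = ⊥ := by
    intro i hij
    refine (hbt i).resolve_right fun htop => ?_
    obtain ⟨a, b, hab⟩ := hT
    have ha : a ∈ (ψ i).range := htop ▸ Subgroup.mem_top a
    have hb : b ∈ (ψ j).range := hj ▸ Subgroup.mem_top b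
    obtain ⟨x, rfl⟩ := ha
    obtain ⟨y, rfl⟩ := hb
    exact hab ((Pi.mulSingle_commute hij x y).map φ)
  have hfac : φ = (ψ j).comp (Pi.evalMonoidHom S j) := by
    refine MonoidHom.pi_ext fun i x => ?_
    by_cases h : i = j
    · subst h
      simp only [MonoidHom.comp_apply, Pi.evalMonoidHom_apply, Pi.mulSingle_eq_same]
      simp [hψ]
    · have h1 : ψ i x ∈ (ψ i).range := ⟨x, rfl⟩
      rw [hbot i h] at h1
      have h2 : φ (Pi.mulSingle i x) = 1 := (by simpa using h1 : ψ i x = 1)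
      rw [h2]
      simp [Pi.mulSingle_apply, h]
  have hsurj : Surjective (ψ j) := by
    rw [← MonoidHom.range_eq_top]; exact hj
  have hinj : Injective (ψ j) := by
    rw [← MonoidHom.ker_eq_bot_iff]
    refine ((ψ j).normal_ker.eq_bot_or_eq_top).resolve_right fun htop => ?_
    obtain ⟨a, b, hab⟩ := hT
    obtain ⟨x, rfl⟩ := hsurj a
    obtain ⟨y, rfl⟩ := hsurj b
    have hx : x ∈ (ψ j).ker := by rw [htop]; trivial
    have hy : y ∈ (ψ j).ker := by rw [htop]; trivial
    rw [MonoidHom.mem_ker] at hx hy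
    rw [hx, hy] at hab
    exact hab rfl
  refine ⟨j, MulEquiv.ofBijective (ψ j) ⟨hinj, hsurj⟩, fun g => ?_⟩
  rw [hfac]
  rfl

open Function

universe u

theorem keyL : ∀ (n : ℕ) (G : Fin n → Type u) [∀ i, Group (G i)] [∀ i, IsSimpleGroup (G i)],
    (∀ i, ∃ a b : G i, a * b ≠ b * a) →
    ∀ (H : Subgroup (∀ i, G i)),
      (∀ i, Function.Surjective fun h : H => (h : ∀ i, G i) i) →
      (H = ⊤ ∨ ∃ i j, i ≠ j ∧ ∃ α : G i ≃* G j, ∀ h ∈ H, h j = α (h i)) := by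
  intro n
  induction n with
  | zero =>
    intro G _ _ _ H _
    left
    ext x
    simp only [Subgroup.mem_top, iff_true]
    have : x = 1 := funext fun i => i.elim0
    rw [this]; exact H.one_mem
  | succ n ih =>
    intro G _ _ hna H hs
    classical
    set G' : Fin n → Type u := fun i => G i.castSucc with hG'
    set π : (∀ i, G i) →* ∀ i, G' i :=
      Pi.monoidHom (fun i => Pi.evalMonoidHom G i.castSucc) with hπ
    set H' : Subgroup (∀ i, G' i) := H.map π with hH'
    have hs' : ∀ i, Function.Surjective fun h : H' => (h : ∀ i, G' i) i := by
      intro i x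
      obtain ⟨⟨h, hh⟩, hx⟩ := hs i.castSucc x
      exact ⟨⟨π h, ⟨h, hh, rfl⟩⟩, hx⟩
    have hna' : ∀ i, ∃ a b : G' i, a * b ≠ b * a := fun i => hna i.castSucc
    rcases ih G' hna' H' hs' with htop | ⟨i, j, hij, α, hα⟩
    · -- H' = ⊤ : analyze N
      set N : Subgroup (G (Fin.last n)) :=
        (H ⊓ π.ker).map (Pi.evalMonoidHom G (Fin.last n)) with hN
      have hNnormal : N.Normal := by
        constructor
        intro x hx g
        obtain ⟨h, hmem, rfl⟩ := Subgroup.mem_map.mp hx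
        obtain ⟨hH, hker⟩ := Subgroup.mem_inf.mp hmem
        obtain ⟨⟨k, hk⟩, hkg⟩ := hs (Fin.last n) g
        have hkg' : k (Fin.last n) = g := hkg
        refine Subgroup.mem_map.mpr ⟨k * h * k⁻¹, Subgroup.mem_inf.mpr
          ⟨H.mul_mem (H.mul_mem hk hH) (H.inv_mem hk), ?_⟩, ?_⟩
        · rw [MonoidHom.mem_ker, map_mul, map_mul, map_inv,
            MonoidHom.mem_ker.mp hker, mul_one, mul_inv_cancel]
        · show k (Fin.last n) * h (Fin.last n) * (k (Fin.last n))⁻¹ = _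
          rw [hkg']
          rfl
      rcases hNnormal.eq_bot_or_eq_top with hbot | htopN
      · -- N = ⊥ : H is a graph; apply lemA
        right
        have huniq : ∀ h h' : ∀ i, G i, h ∈ H → h' ∈ H → π h = π h' →
            h (Fin.last n) = h' (Fin.last n) := by
          intro h h' hh hh' hpi
          have hmem : h * h'⁻¹ ∈ H ⊓ π.ker := Subgroup.mem_inf.mpr
            ⟨H.mul_mem hh (H.inv_mem hh'), by
              rw [MonoidHom.mem_ker, map_mul, map_inv, hpi, mul_inv_cancel]⟩
          have : (h * h'⁻¹) (Fin.last n) ∈ N := Subgroup.mem_map.mpr ⟨h * h'⁻¹, hmem, rfl⟩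
          rw [hbot] at this
          have h1 : h (Fin.last n) * (h' (Fin.last n))⁻¹ = 1 := by simpa using this
          exact mul_inv_eq_one.mp h1
        have hch : ∀ g' : ∀ i, G' i, ∃ h, h ∈ H ∧ π h = g' := by
          intro g'
          have : g' ∈ H' := htop ▸ Subgroup.mem_top g'
          obtain ⟨h, hh, hph⟩ := Subgroup.mem_map.mp this
          exact ⟨h, hh, hph⟩
        set c : (∀ i, G' i) → (∀ i, G i) := fun g' => (hch g').choose with hc
        have hcH : ∀ g', c g' ∈ H := fun g' => (hch g').choose_spec.1
        have hcπ : ∀ g', π (c g') = g' := fun g' => (hch g').choose_spec.2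
        set φ : (∀ i, G' i) →* G (Fin.last n) :=
          { toFun := fun g' => c g' (Fin.last n)
            map_one' := huniq (c 1) 1 (hcH 1) H.one_mem (by rw [hcπ]; simp)
            map_mul' := by
              intro a b
              exact huniq (c (a * b)) (c a * c b) (hcH _) (H.mul_mem (hcH a) (hcH b))
                (by rw [hcπ, map_mul, hcπ, hcπ]) } with hφdef
        have hφH : ∀ h, h ∈ H → φ (π h) = h (Fin.last n) := by
          intro h hh
          exact huniq (c (π h)) h (hcH _) hh (hcπ _)
        have hφsurj : Surjective φ := by
          intro t
          obtain ⟨⟨h, hh⟩, hht⟩ := hs (Fin.last n) t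
          exact ⟨π h, by rw [hφH h hh]; exact hht⟩
        obtain ⟨j, e, he⟩ := lemA (hna (Fin.last n)) φ hφsurj
        refine ⟨j.castSucc, Fin.last n, (Fin.castSucc_lt_last j).ne, e, ?_⟩
        intro h hh
        rw [← hφH h hh, he (π h)]
        rfl
      · -- N = ⊤ : H = ⊤
        left
        ext x
        simp only [Subgroup.mem_top, iff_true]
        have : π x ∈ H' := htop ▸ Subgroup.mem_top (π x)
        obtain ⟨h, hh, hph⟩ := Subgroup.mem_map.mp this
        have hy : x (Fin.last n) * (h (Fin.last n))⁻¹ ∈ N :=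
          htopN ▸ Subgroup.mem_top _
        obtain ⟨h₂, hmem₂, hlast₂⟩ := Subgroup.mem_map.mp hy
        obtain ⟨hh₂, hker₂⟩ := Subgroup.mem_inf.mp hmem₂
        have hlast₂' : h₂ (Fin.last n) = x (Fin.last n) * (h (Fin.last n))⁻¹ := hlast₂
        have : h₂ * h = x := by
          funext i
          refine Fin.lastCases ?_ ?_ i
          · show h₂ (Fin.last n) * h (Fin.last n) = x (Fin.last n)
            rw [hlast₂']
            group
          · intro i
            show h₂ i.castSucc * h i.castSucc = x i.castSucc
            have h2one : h₂ i.castSucc = 1 := congrFun (MonoidHom.mem_ker.mp hker₂) i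
            have hpe : h i.castSucc = x i.castSucc := congrFun hph i
            rw [h2one, one_mul, hpe]
        rw [← this]
        exact H.mul_mem hh₂ hh
    · -- inequivalence case lifts
      right
      refine ⟨i.castSucc, j.castSucc, fun hc => hij (Fin.castSucc_injective n hc), α, ?_⟩
      intro h hh
      exact hα (π h) ⟨h, hh, rfl⟩

/-- Dunfield–Thurston joint surjectivity: if every component of
`f : K → G 1 × ⋯ × G n` is surjective onto a non-abelian simple group and no two components
are equivalent by an isomorphism, then `f` is surjective. -/
theorem stmt_2 {n : ℕ} {K : Type*} [Group K] {G : Fin n → Type*} [∀ i, Group (G i)]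
    [∀ i, IsSimpleGroup (G i)] (hna : ∀ i, ∃ a b : G i, a * b ≠ b * a)
    (f : K →* ∀ i, G i)
    (hsurj : ∀ i, Function.Surjective (fun k => f k i))
    (hneq : ∀ i j, i ≠ j → ∀ α : G i ≃* G j, ¬ (∀ k, f k j = α (f k i))) :
    Function.Surjective f := by
  have hs : ∀ i, Function.Surjective fun h : f.range => (h : ∀ i, G i) i := by
    intro i x
    obtain ⟨k, hk⟩ := hsurj i x
    exact ⟨⟨f k, ⟨k, rfl⟩⟩, hk⟩
  rcases keyL n G hna f.range hs with htop | ⟨i, j, hij, α, hα⟩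
  · intro y
    have : y ∈ f.range := htop ▸ Subgroup.mem_top y
    exact this
  · exact absurd (fun k => hα (f k) ⟨k, rfl⟩) (hneq i j hij α)
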